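/- Let A₁,…,A_k be n×n real 0-1 matrices summing to J, such that Σᵢ xᵢAᵢ is normal for all real xᵢ. If A₁ has exactly one nonzero entry, located at position (1,1), then the first row of Σᵢ xᵢAᵢ equals the transpose of its first column for all values of the xᵢ; equivalently, each Aⱼ has its first row equal to the transpose of its first column. -/

import Mathlib

open Matrix

theorem stmt14 (n k : ℕ) [NeZero n] [NeZero k] (A : Fin k → Matrix (Fin n) (Fin n) ℝ)
    (h01 : ∀ i a b, A i a b = 0 ∨ A i a b = 1)
    (hsum : ∑ i, A i = fun _ _ => (1 : ℝ))
    (h : ∀ x : Fin k → ℝ,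
        (∑ i, x i • A i) * (∑ i, x i • A i)ᵀ = (∑ i, x i • A i)ᵀ * (∑ i, x i • A i))
    (hA1 : ∀ a b, A 0 a b = if a = 0 ∧ b = 0 then 1 else 0) :
    ∀ j : Fin k, ∀ i : Fin n, A j 0 i = A j i 0 := by
  intro j i
  rcases eq_or_ne i 0 with hi | hi
  · subst hi; rfl
  rcases eq_or_ne j 0 with hj | hj
  · subst hj; rw [hA1, hA1]; simp [hi, Ne.symm hi]
  have key : ∀ t : ℝ, (∑ l, (fun l => if l = 0 then t else if l = j then (1:ℝ) else 0) l • A l)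
      = t • A 0 + A j := by
    intro t
    rw [show (t • A 0 + A j) = ∑ l, ((if l = (0 : Fin k) then t • A 0 else 0)
        + (if l = j then A j else 0)) by
      rw [Finset.sum_add_distrib, Finset.sum_ite_eq', Finset.sum_ite_eq']; simp]
    apply Finset.sum_congr rfl
    intro l _
    by_cases h0 : l = 0
    · subst h0; simp [Ne.symm hj]
    by_cases hlj : l = j
    · subst hlj; simp [h0]
    · simp [h0, hlj]
  have hE : ∀ t : ℝ, (((t • A 0 + A j) * (t • A 0 + A j)ᵀ) 0 i)
      = (((t • A 0 + A j)ᵀ * (t • A 0 + A j)) 0 i) := by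
    intro t
    have := h (fun l => if l = 0 then t else if l = j then 1 else 0)
    rw [key t] at this
    exact congrFun (congrFun this 0) i
  have hs : ∀ t : ℝ,
      t * A j i 0 + (∑ m, A j 0 m * A j i m)
      = t * A j 0 i + (∑ m, A j m 0 * A j m i) := by
    intro t
    have H := hE t
    simp only [mul_apply, transpose_apply, Matrix.add_apply, Matrix.smul_apply, smul_eq_mul, hA1,
      hi, and_false, false_and, if_false, mul_zero, add_zero, zero_add, true_and] at H
    rw [Finset.sum_congr rfl (fun m _ => by ring_nf :
        ∀ m ∈ Finset.univ, ((t * if m = 0 then (1:ℝ) else 0) + A j 0 m) * A j i m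
          = (t * if m = 0 then (1:ℝ) else 0) * A j i m + A j 0 m * A j i m)] at H
    simp only [and_true] at H
    rw [Finset.sum_congr rfl (fun m _ => by ring_nf :
        ∀ m ∈ Finset.univ, ((t * if m = 0 then (1:ℝ) else 0) + A j m 0) * A j m i
          = (t * if m = 0 then (1:ℝ) else 0) * A j m i + A j m 0 * A j m i)] at H
    simp only [Finset.sum_add_distrib, mul_ite, mul_one, mul_zero, ite_mul, zero_mul,
      Finset.sum_ite_eq', Finset.mem_univ, if_true] at H
    linarith [H]
  have h1 := hs 1
  have h2 := hs 2
  linarith
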